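/- Let A(x) = [[x₀+x₁, x₀+x₂, x₃, x₂],[x₀+x₂, x₀−x₁, x₃, x₂],[x₃, x₃, x₄, x₅],[x₂, x₂, x₅, 0]]. Then the Jacobian ideal of f = det A(x) (the ideal generated by f and its six partial derivatives) is contained in the ideal ⟨x₂², x₅⟩; in particular the quartic hypersurface f = 0 in ℙ⁵ contains the 3-space {x₂ = x₅ = 0} doubly in its singular locus. -/

import Mathlib

open MvPolynomial Matrix

noncomputable def pencilD : Matrix (Fin 4) (Fin 4) (MvPolynomial (Fin 6) ℚ) :=
  !![X 0 + X 1, X 0 + X 2, X 3, X 2;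
     X 0 + X 2, X 0 - X 1, X 3, X 2;
     X 3, X 3, X 4, X 5;
     X 2, X 2, X 5, 0]

lemma fval : pencilD.det =
    X 2 ^ 2 * (X 5 * X 5 - 4 * (X 3 * X 5) + 2 * (X 2 * X 4)) +
      X 5 * (X 1 * X 1 * X 5 + 2 * (X 0 * X 2 * X 5)) := by
  simp [pencilD, Matrix.det_succ_row_zero, Fin.sum_univ_succ, Fin.succAbove, Fin.castSucc,
    Fin.castAdd, Fin.castLE]
  ring

lemma pderiv_ofNat (i : Fin 6) (n : ℕ) [n.AtLeastTwo] :
    pderiv i (no_index (OfNat.ofNat n) : MvPolynomial (Fin 6) ℚ) = 0 := by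
  rw [show (OfNat.ofNat n : MvPolynomial (Fin 6) ℚ) = C (OfNat.ofNat n) from
    (map_ofNat C n).symm]
  simp

/-- The Jacobian ideal of `f = det A(x)` (generated by `f` and its six partial
derivatives) is contained in the ideal `⟨x₂², x₅⟩`: the quartic `f = 0` contains the
3-space `{x₂ = x₅ = 0}` doubly in its singular locus. -/
theorem jacobian_ideal_contained :
    Ideal.span ({pencilD.det} ∪ Set.range fun i : Fin 6 => pderiv i pencilD.det) ≤
      Ideal.span {(X 2 : MvPolynomial (Fin 6) ℚ) ^ 2, X 5} := by
  rw [Ideal.span_le]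
  rintro p (rfl | ⟨i, rfl⟩)
  · exact Ideal.mem_span_pair.mpr
      ⟨X 5 * X 5 - 4 * (X 3 * X 5) + 2 * (X 2 * X 4),
        X 1 * X 1 * X 5 + 2 * (X 0 * X 2 * X 5), by rw [fval]; ring⟩
  · fin_cases i <;> simp only [SetLike.mem_coe, Ideal.mem_span_pair]
    · exact ⟨0, 2 * (X 2 * X 5), by rw [fval]; simp [pderiv_X, pderiv_ofNat]; ring⟩
    · exact ⟨0, 2 * (X 1 * X 5), by rw [fval]; simp [pderiv_X, pderiv_ofNat]; ring⟩
    · exact ⟨6 * X 4, 2 * (X 2 * X 5) - 8 * (X 2 * X 3) + 2 * (X 0 * X 5),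
        by rw [fval]; simp [pderiv_X, pderiv_ofNat]; ring⟩
    · exact ⟨-4 * X 5, 0, by rw [fval]; simp [pderiv_X, pderiv_ofNat]; ring⟩
    · exact ⟨2 * X 2, 0, by rw [fval]; simp [pderiv_X, pderiv_ofNat]; ring⟩
    · exact ⟨2 * X 5 - 4 * X 3, 2 * (X 1 * X 1) + 4 * (X 0 * X 2),
        by rw [fval]; simp [pderiv_X, pderiv_ofNat]; ring⟩
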